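/- arXiv:math/0009036 — 2 statements merged into one kernel-verified Lean document; each statement's English description precedes it below -/
import Mathlib

section
/- In the ring of formal power series in two variables x and q with integer coefficients, 1 + Σ_{m=1}^∞ x^m [(xq)_m − (xq)_{m−1}] = (1 − x) · Σ_{m=0}^∞ (xq)_m x^m = Σ_{r=0}^∞ (x)_{r+1} x^r, where (xq)_m = ∏_{j=1}^m (1 − x q^j) and (x)_{r+1} = ∏_{k=1}^{r+1} (1 − x q^{k−1}) = (1 − x)(1 − xq)⋯(1 − x q^r). (All three infinite sums are well defined in ℤ⟦x, q⟧ since the m-th, respectively r-th, term is divisible by x^m, respectively x^r.) -/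
open PowerSeries Finset

/-- `ℤ⟦x,q⟧`, realized as `(ℤ⟦q⟧)⟦x⟧`. -/
abbrev Zxq : Type := PowerSeries (PowerSeries ℤ)

/-- The variable `x`. -/
noncomputable def xv : Zxq := PowerSeries.X

/-- The variable `q`. -/
noncomputable def qv : Zxq := PowerSeries.C (R := PowerSeries ℤ) PowerSeries.X

/-- `(xq)_m = ∏_{j=1}^m (1 - x q^j)` in `ℤ⟦x,q⟧`, with `(xq)_0 = 1`. -/
noncomputable def xqPoch (m : ℕ) : Zxq :=
  ∏ j ∈ Finset.range m, (1 - xv * qv ^ (j + 1))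

/-- `(x)_n = ∏_{k=1}^n (1 - x q^{k-1})` in `ℤ⟦x,q⟧`; so `(x)_{r+1} = (1-x)(1-xq)⋯(1-xq^r)`. -/
noncomputable def xPoch (n : ℕ) : Zxq :=
  ∏ k ∈ Finset.range n, (1 - xv * qv ^ k)

/-- `1 + Σ_{m=1}^∞ x^m [(xq)_m - (xq)_{m-1}]`, defined by its coefficient of `x^a`:
the `m`-th term is divisible by `x^m`, so only terms with `m ≤ a` contribute. -/
noncomputable def seriesA : Zxq :=
  1 + PowerSeries.mk fun a =>
    PowerSeries.coeff (R := PowerSeries ℤ) a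
      (∑ m ∈ Finset.Icc 1 a, xv ^ m * (xqPoch m - xqPoch (m - 1)))

/-- `(1 - x) · Σ_{m=0}^∞ (xq)_m x^m`, the sum defined by its coefficient of `x^a`:
the `m`-th term is divisible by `x^m`, so only terms with `m ≤ a` contribute. -/
noncomputable def seriesB : Zxq :=
  (1 - xv) * PowerSeries.mk fun a =>
    PowerSeries.coeff (R := PowerSeries ℤ) a (∑ m ∈ Finset.range (a + 1), xqPoch m * xv ^ m)

/-- `Σ_{r=0}^∞ (x)_{r+1} x^r`, defined by its coefficient of `x^a`: the `r`-th term is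
divisible by `x^r`, so only terms with `r ≤ a` contribute. -/
noncomputable def seriesC : Zxq :=
  PowerSeries.mk fun a =>
    PowerSeries.coeff (R := PowerSeries ℤ) a (∑ r ∈ Finset.range (a + 1), xPoch (r + 1) * xv ^ r)

/-- partial sums `T N = ∑_{m<N} (xq)_m x^m`. -/
noncomputable def Tps (N : ℕ) : Zxq := ∑ m ∈ Finset.range N, xqPoch m * xv ^ m

lemma xPoch_succ (r : ℕ) : xPoch (r + 1) = (1 - xv) * xqPoch r := by
  rw [xPoch, Finset.prod_range_succ', xqPoch]
  simp [mul_comm]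

lemma coeff_term_zero {a m : ℕ} (h : a < m) (f : Zxq) :
    (PowerSeries.coeff (R := PowerSeries ℤ) a) (f * xv ^ m) = 0 := by
  rw [xv, PowerSeries.coeff_mul_X_pow', if_neg (by omega)]

lemma Tps_succ (N : ℕ) : Tps (N + 1) = Tps N + xqPoch N * xv ^ N :=
  Finset.sum_range_succ _ _

lemma coeff_T_stable {a N : ℕ} (h : a + 1 ≤ N) :
    (PowerSeries.coeff (R := PowerSeries ℤ) a) (Tps N)
      = (PowerSeries.coeff (R := PowerSeries ℤ) a) (Tps (a + 1)) := by
  have key : Tps N = Tps (a + 1) + ∑ m ∈ Finset.Ico (a + 1) N, xqPoch m * xv ^ m := by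
    rw [Tps, Tps, Finset.sum_range_add_sum_Ico _ h]
  rw [key, map_add, map_sum, Finset.sum_eq_zero, add_zero]
  intro m hm
  exact coeff_term_zero (by rw [Finset.mem_Ico] at hm; omega) _

lemma coeff_mul_congr (a : ℕ) (c f g : Zxq)
    (h : ∀ b ≤ a, (PowerSeries.coeff (R := PowerSeries ℤ) b) f
      = (PowerSeries.coeff (R := PowerSeries ℤ) b) g) :
    (PowerSeries.coeff (R := PowerSeries ℤ) a) (c * f)
      = (PowerSeries.coeff (R := PowerSeries ℤ) a) (c * g) := by
  rw [PowerSeries.coeff_mul, PowerSeries.coeff_mul]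
  refine Finset.sum_congr rfl fun p hp => ?_
  rw [h p.2 (by rw [Finset.HasAntidiagonal.mem_antidiagonal] at hp; omega)]

lemma telescope (a : ℕ) :
    (1 : Zxq) + ∑ m ∈ Finset.Icc 1 a, xv ^ m * (xqPoch m - xqPoch (m - 1))
      = (1 - xv) * Tps (a + 1) + xv ^ (a + 1) * xqPoch a := by
  induction a with
  | zero => simp [Tps, xqPoch]
  | succ n ih =>
    rw [Finset.sum_Icc_succ_top (by omega), ← add_assoc, ih, Nat.add_sub_cancel,
      show Tps (n + 1 + 1) = Tps (n + 1) + xqPoch (n + 1) * xv ^ (n + 1) from Tps_succ _]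
    ring

lemma coeff_B (a : ℕ) :
    (PowerSeries.coeff (R := PowerSeries ℤ) a) seriesB
      = (PowerSeries.coeff (R := PowerSeries ℤ) a) ((1 - xv) * Tps (a + 1)) := by
  rw [seriesB]
  refine coeff_mul_congr a _ _ _ fun b hb => ?_
  rw [PowerSeries.coeff_mk, ← Tps]
  exact (coeff_T_stable (by omega : b + 1 ≤ a + 1)).symm

/-- `1 + Σ_{m=1}^∞ x^m [(xq)_m - (xq)_{m-1}] = (1-x) Σ_{m=0}^∞ (xq)_m x^m
= Σ_{r=0}^∞ (x)_{r+1} x^r` in `ℤ⟦x,q⟧`. -/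
theorem seriesA_eq_seriesB_eq_seriesC : seriesA = seriesB ∧ seriesB = seriesC := by
  constructor
  · ext a
    rw [coeff_B, seriesA, map_add, PowerSeries.coeff_mk, ← map_add, telescope, map_add,
      mul_comm (xv ^ (a + 1)), coeff_term_zero (Nat.lt_succ_self a), add_zero]
  · ext a
    rw [coeff_B, seriesC, PowerSeries.coeff_mk]
    have key : (1 - xv) * Tps (a + 1) = ∑ r ∈ Finset.range (a + 1), xPoch (r + 1) * xv ^ r := by
      rw [Tps, Finset.mul_sum]
      exact Finset.sum_congr rfl fun r _ => by rw [xPoch_succ, mul_assoc]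
    rw [key]
end

section
/- In the ring of formal power series in two variables x and q with integer coefficients, Σ_{r=0}^∞ (x)_{r+1} x^r = 1 + Σ_{r=1}^∞ (−1)^r [x^{3r−1} q^{r(3r−1)/2} + x^{3r} q^{r(3r+1)/2}], where (x)_{r+1} = (1 − x)(1 − xq)(1 − xq²)⋯(1 − x q^r). -/
open PowerSeries Finset

/-- `S(x) = Σ_{r=0}^∞ (x)_{r+1} x^r`, defined by its coefficient of `x^a`: the `r`-th
term is divisible by `x^r`, so only terms with `r ≤ a` contribute. -/
noncomputable def zagierS : Zxq :=
  PowerSeries.mk fun a =>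
    PowerSeries.coeff (R := PowerSeries ℤ) a (∑ r ∈ Finset.range (a + 1), xPoch (r + 1) * xv ^ r)

/-- `1 + Σ_{r=1}^∞ (-1)^r [x^{3r-1} q^{r(3r-1)/2} + x^{3r} q^{r(3r+1)/2}]`, defined by
its coefficient of `x^a`: only terms with `r ≤ a` contribute. -/
noncomputable def pentagonalXqSeries : Zxq :=
  PowerSeries.mk fun a =>
    (if a = 0 then 1 else 0) +
      ∑ r ∈ Finset.Icc 1 a, (-1 : PowerSeries ℤ) ^ r *
        ((if a = 3 * r - 1 then (PowerSeries.X : PowerSeries ℤ) ^ (r * (3 * r - 1) / 2) else 0) +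
         (if a = 3 * r then (PowerSeries.X : PowerSeries ℤ) ^ (r * (3 * r + 1) / 2) else 0))

namespace ZagierAux

noncomputable def S (m : ℕ) : Zxq := ∑ r ∈ Finset.range (m+1), xPoch (r+1) * xv ^ r
noncomputable def P (m : ℕ) : Zxq := ∏ k ∈ Finset.range m, (1 - xv * qv ^ (k+1))

lemma xPoch_succ' (n : ℕ) : xPoch (n+1) = (1 - xv) * P n := by
  unfold xPoch P
  rw [Finset.prod_range_succ']
  simp [mul_comm]

lemma P_succ (n : ℕ) : P (n+1) = P n * (1 - xv * qv ^ (n+1)) := Finset.prod_range_succ _ _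

lemma rescale_qv : rescale (PowerSeries.X : PowerSeries ℤ) qv = qv := by
  ext n
  simp only [qv, coeff_rescale, PowerSeries.coeff_C]
  split
  · next h => subst h; simp
  · rw [mul_zero]

lemma rescale_xv : rescale (PowerSeries.X : PowerSeries ℤ) xv = qv * xv := by
  rw [xv, rescale_X]; rfl

lemma rescale_S (m : ℕ) :
    rescale (PowerSeries.X : PowerSeries ℤ) (S m)
      = ∑ r ∈ Finset.range (m+1), P (r+1) * (qv * xv) ^ r := by
  unfold S
  rw [map_sum]
  refine Finset.sum_congr rfl fun r _ => ?_
  rw [map_mul, map_pow, rescale_xv]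
  congr 1
  unfold xPoch P
  rw [map_prod]
  refine Finset.prod_congr rfl fun k _ => ?_
  rw [map_sub, map_one, map_mul, map_pow, rescale_xv, rescale_qv]
  ring


lemma key (m : ℕ) : S (m+2) = 1 - xv^2*qv - xv^3*qv^2 * rescale PowerSeries.X (S m)
    - xv^(m+3) * P (m+2) := by
  induction m with
  | zero =>
    rw [rescale_S]
    simp only [S, P, xPoch, Finset.sum_range_succ, Finset.sum_range_zero,
      Finset.prod_range_succ, Finset.prod_range_zero, zero_add]
    ring
  | succ n ih =>
    have hS : S (n+3) = S (n+2) + xPoch (n+4) * xv^(n+3) := Finset.sum_range_succ _ _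
    have hR : rescale (PowerSeries.X : PowerSeries ℤ) (S (n+1))
        = rescale PowerSeries.X (S n) + P (n+2) * (qv*xv)^(n+1) := by
      rw [rescale_S, rescale_S, Finset.sum_range_succ]
    have h4 : xPoch (n+4) = (1 - xv) * (P (n+2) * (1 - xv * qv ^ (n+3))) := by
      rw [xPoch_succ' (n+3), P_succ (n+2)]
    rw [show n+1+2 = n+3 from rfl, hS, ih, hR, h4, show n+1+3 = n+4 from rfl,
      show n+1+2 = n+3 from rfl, P_succ (n+2)]
    ring


lemma coeff_S_stable {n m : ℕ} (h : n ≤ m) :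
    PowerSeries.coeff n (S m) = PowerSeries.coeff n (S n) := by
  induction m with
  | zero => interval_cases n; rfl
  | succ k ih =>
    rcases Nat.lt_or_ge n (k+1) with h' | h'
    · have : S (k+1) = S k + xPoch (k+2) * xv^(k+1) := Finset.sum_range_succ _ _
      rw [this, map_add, xv, PowerSeries.coeff_mul_X_pow' (xPoch (k+2)) (k+1) n,
        if_neg (by omega), add_zero, ih (by omega)]
    · have : n = k+1 := by omega
      subst this; rfl

lemma coeff_zagierS (a : ℕ) :
    PowerSeries.coeff a zagierS = PowerSeries.coeff a (S a) := by
  simp [zagierS, S]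

lemma c_rec (a : ℕ) : PowerSeries.coeff (a+3) zagierS
    = -((PowerSeries.X : PowerSeries ℤ)^(a+2)) * PowerSeries.coeff a zagierS := by
  rw [coeff_zagierS, coeff_zagierS, show a+3 = a+1+2 from rfl, key (a+1)]
  rw [map_sub, map_sub, map_sub]
  have h1 : PowerSeries.coeff (R := PowerSeries ℤ) (a+1+2) (1 : Zxq) = 0 := by
    rw [PowerSeries.coeff_one, if_neg (by omega)]
  have h2 : PowerSeries.coeff (R := PowerSeries ℤ) (a+1+2) (xv^2*qv) = 0 := by
    rw [qv, mul_comm, xv, PowerSeries.coeff_C_mul, PowerSeries.coeff_X_pow,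
      if_neg (by omega), mul_zero]
  have h3 : PowerSeries.coeff (R := PowerSeries ℤ) (a+1+2) (xv^(a+1+3) * P (a+1+2)) = 0 := by
    rw [mul_comm, xv, PowerSeries.coeff_mul_X_pow', if_neg (by omega)]
  have h4 : xv^3*qv^2 * rescale PowerSeries.X (S (a+1))
      = (qv^2 * rescale PowerSeries.X (S (a+1))) * xv^3 := by ring
  have h5 : PowerSeries.coeff (R := PowerSeries ℤ) (a+1+2) (xv^3*qv^2 * rescale PowerSeries.X (S (a+1)))
      = (PowerSeries.X : PowerSeries ℤ)^(a+2) * PowerSeries.coeff a (S a) := by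
    rw [h4, xv, show a+1+2 = a+3 from rfl, PowerSeries.coeff_mul_X_pow, qv, ← map_pow,
      PowerSeries.coeff_C_mul, coeff_rescale, coeff_S_stable (Nat.le_succ a)]
    ring
  rw [h1, h2, h3, h5]
  ring


noncomputable def t (a r : ℕ) : PowerSeries ℤ :=
  (-1 : PowerSeries ℤ) ^ r *
    ((if a = 3 * r - 1 then (PowerSeries.X : PowerSeries ℤ) ^ (r * (3 * r - 1) / 2) else 0) +
     (if a = 3 * r then (PowerSeries.X : PowerSeries ℤ) ^ (r * (3 * r + 1) / 2) else 0))

lemma sum_Icc_one (a : ℕ) (f : ℕ → PowerSeries ℤ) :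
    ∑ r ∈ Finset.Icc 1 a, f r = ∑ i ∈ Finset.range a, f (i+1) := by
  induction a with
  | zero => simp
  | succ k ih => rw [Finset.sum_Icc_succ_top (by omega), ih, Finset.sum_range_succ]

lemma coeff_pent (a : ℕ) : PowerSeries.coeff a pentagonalXqSeries
    = (if a = 0 then 1 else 0) + ∑ i ∈ Finset.range a, t a (i+1) := by
  simp only [pentagonalXqSeries, PowerSeries.coeff_mk]
  rw [sum_Icc_one]
  rfl

lemma even_pent1 (r : ℕ) : 2 ∣ r * (3 * r - 1) := by
  rcases Nat.even_or_odd r with h | h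
  · exact Dvd.dvd.mul_right h.two_dvd _
  · obtain ⟨k, hk⟩ := h
    exact Dvd.dvd.mul_left (⟨3*k+1, by omega⟩ : 2 ∣ (3*r-1)) _

lemma even_pent2 (r : ℕ) : 2 ∣ r * (3 * r + 1) := by
  rcases Nat.even_or_odd r with h | h
  · exact Dvd.dvd.mul_right h.two_dvd _
  · obtain ⟨k, hk⟩ := h
    exact Dvd.dvd.mul_left (⟨3*k+2, by omega⟩ : 2 ∣ (3*r+1)) _

lemma gstep (r : ℕ) : (r+1)*(3*(r+1)-1)/2 = r*(3*r-1)/2 + (3*r+1) := by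
  have e1 := even_pent1 r
  have e2 : (r+1)*(3*(r+1)-1) = r*(3*r-1) + (6*r+2) := by
    rcases r with _ | s
    · rfl
    · have h1 : 3*(s+1)-1 = 3*s+2 := by omega
      have h2 : 3*(s+1+1)-1 = 3*s+5 := by omega
      rw [h1, h2]; ring
  generalize r*(3*r-1) = A at *
  generalize (r+1)*(3*(r+1)-1) = B at *
  omega

lemma hstep (r : ℕ) : (r+1)*(3*(r+1)+1)/2 = r*(3*r+1)/2 + (3*r+2) := by
  have e1 := even_pent2 r
  have e2 : (r+1)*(3*(r+1)+1) = r*(3*r+1) + (6*r+4) := by ring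
  generalize r*(3*r+1) = A at *
  generalize (r+1)*(3*(r+1)+1) = B at *
  omega

lemma t_shift (a i : ℕ) :
    t (a+3) (i+2) = -((PowerSeries.X : PowerSeries ℤ)^(a+2)) * t a (i+1) := by
  unfold t
  by_cases h1 : a = 3*i+2
  · rw [if_pos (by omega), if_neg (by omega), if_pos (by omega), if_neg (by omega)]
    have he : (i+2)*(3*(i+2)-1)/2 = (a+2) + (i+1)*(3*(i+1)-1)/2 := by
      have h := gstep (i+1)
      rw [show i+1+1 = i+2 from rfl] at h
      omega
    rw [he, pow_add]
    ring
  · by_cases h2 : a = 3*(i+1)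
    · rw [if_neg (by omega), if_pos (by omega), if_neg (by omega), if_pos (by omega)]
      have he : (i+2)*(3*(i+2)+1)/2 = (a+2) + (i+1)*(3*(i+1)+1)/2 := by
        have h := hstep (i+1)
        rw [show i+1+1 = i+2 from rfl] at h
        omega
      rw [he, pow_add]
      ring
    · rw [if_neg (by omega), if_neg (by omega), if_neg (by omega), if_neg (by omega)]
      ring

lemma t_top1 (a : ℕ) : t a (a+1) = 0 := by
  unfold t; rw [if_neg (by omega), if_neg (by omega)]; ring

lemma t_top2 (a : ℕ) : t a (a+2) = 0 := by
  unfold t; rw [if_neg (by omega), if_neg (by omega)]; ring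

lemma p_rec (a : ℕ) : PowerSeries.coeff (a+3) pentagonalXqSeries
    = -((PowerSeries.X : PowerSeries ℤ)^(a+2)) * PowerSeries.coeff a pentagonalXqSeries := by
  rw [coeff_pent, coeff_pent, if_neg (by omega)]
  rw [Finset.sum_range_succ' (fun i => t (a+3) (i+1)) (a+2), zero_add]
  have hsum : ∑ i ∈ Finset.range (a+2), t (a+3) (i+1+1)
      = -((PowerSeries.X : PowerSeries ℤ)^(a+2)) * ∑ i ∈ Finset.range (a+2), t a (i+1) := by
    rw [Finset.mul_sum]
    exact Finset.sum_congr rfl fun i _ => t_shift a i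
  have hsum2 : ∑ i ∈ Finset.range (a+2), t a (i+1)
      = ∑ i ∈ Finset.range a, t a (i+1) := by
    rw [Finset.sum_range_succ, Finset.sum_range_succ, show a+1+1 = a+2 from rfl,
      t_top1, t_top2, add_zero, add_zero]
  have ht1 : t (a+3) (0+1) = if a = 0 then -((PowerSeries.X : PowerSeries ℤ)^(a+2)) else 0 := by
    unfold t
    by_cases h : a = 0
    · subst h; norm_num
    · rw [if_neg (by omega), if_neg (by omega), if_neg h]; ring
  rw [hsum, hsum2, ht1]
  by_cases h : a = 0
  · subst h; simp
  · rw [if_neg h, if_neg h, zero_add, add_zero]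


lemma constCoeff_xPoch (n : ℕ) : PowerSeries.constantCoeff (R := PowerSeries ℤ) (xPoch n) = 1 := by
  unfold xPoch
  rw [map_prod]
  refine Finset.prod_eq_one fun k _ => ?_
  simp [xv, qv]

lemma c0 : PowerSeries.coeff 0 zagierS = PowerSeries.coeff 0 pentagonalXqSeries := by
  rw [coeff_zagierS, coeff_pent]
  rw [S, Finset.sum_range_one, pow_zero, mul_one, PowerSeries.coeff_zero_eq_constantCoeff,
    constCoeff_xPoch]
  norm_num

lemma c1 : PowerSeries.coeff 1 zagierS = PowerSeries.coeff 1 pentagonalXqSeries := by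
  rw [coeff_zagierS, coeff_pent]
  have hp : t 1 (0+1) = 0 := by norm_num [t]
  rw [S, Finset.sum_range_succ, Finset.sum_range_one, map_add, pow_zero, mul_one, pow_one]
  have h1 : PowerSeries.coeff (R := PowerSeries ℤ) 1 (xPoch 1) = -1 := by
    rw [xPoch, Finset.prod_range_one, pow_zero, mul_one, map_sub, PowerSeries.coeff_one,
      xv, PowerSeries.coeff_X]
    norm_num
  have h2 : PowerSeries.coeff (R := PowerSeries ℤ) 1 (xPoch 2 * xv) = 1 := by
    rw [xv, show (1:ℕ) = 0 + 1 from rfl, ← pow_one (PowerSeries.X : Zxq),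
      PowerSeries.coeff_mul_X_pow, PowerSeries.coeff_zero_eq_constantCoeff, constCoeff_xPoch]
  rw [h1, h2, Finset.sum_range_one, hp]
  norm_num

lemma c2 : PowerSeries.coeff 2 zagierS = PowerSeries.coeff 2 pentagonalXqSeries := by
  rw [coeff_zagierS, coeff_pent]
  have hp : ∑ i ∈ Finset.range 2, t 2 (i+1) = -PowerSeries.X := by
    rw [Finset.sum_range_succ, Finset.sum_range_one]
    norm_num [t]
  rw [hp, if_neg (by omega), zero_add]
  rw [show (2:ℕ) = 0+2 from rfl, key 0, map_sub, map_sub, map_sub]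
  have h1 : PowerSeries.coeff (R := PowerSeries ℤ) (0+2) (1 : Zxq) = 0 := by
    rw [PowerSeries.coeff_one, if_neg (by omega)]
  have h2 : PowerSeries.coeff (R := PowerSeries ℤ) (0+2) (xv^2*qv) = PowerSeries.X := by
    rw [qv, mul_comm, xv, PowerSeries.coeff_C_mul, PowerSeries.coeff_X_pow, if_pos rfl,
      mul_one]
  have h3 : PowerSeries.coeff (R := PowerSeries ℤ) (0+2)
      (xv^3*qv^2 * rescale PowerSeries.X (S 0)) = 0 := by
    rw [show xv^3*qv^2 * rescale PowerSeries.X (S 0)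
        = (qv^2 * rescale PowerSeries.X (S 0)) * xv^3 from by ring,
      xv, PowerSeries.coeff_mul_X_pow', if_neg (by omega)]
  have h4 : PowerSeries.coeff (R := PowerSeries ℤ) (0+2) (xv^(0+3) * P (0+2)) = 0 := by
    rw [mul_comm, xv, PowerSeries.coeff_mul_X_pow', if_neg (by omega)]
  rw [h1, h2, h3, h4]
  ring

end ZagierAux

/-- `Σ_{r=0}^∞ (x)_{r+1} x^r = 1 + Σ_{r=1}^∞ (-1)^r [x^{3r-1} q^{r(3r-1)/2} + x^{3r} q^{r(3r+1)/2}]`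
in `ℤ⟦x,q⟧`. -/
theorem zagierS_eq_pentagonalXqSeries : zagierS = pentagonalXqSeries := by
  refine PowerSeries.ext fun a => ?_
  induction a using Nat.strong_induction_on with
  | _ a ih =>
    rcases a with _ | (_ | (_ | b))
    · exact ZagierAux.c0
    · exact ZagierAux.c1
    · exact ZagierAux.c2
    · rw [ZagierAux.c_rec, ZagierAux.p_rec, ih b (by omega)]
end
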